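/- A separable Banach space X is not strongly NSS if and only if X has a closed linear subspace topologically isomorphic to c_0. -/

import Mathlib

open Filter Topology ZeroAtInfty

/-- `V` is an unenclosed set of the additive group `X`. -/
def UnenclosedAdd (X : Type*) [AddGroup X] [TopologicalSpace X] (V : Set X) : Prop :=
  IsOpen V ∧ (0 : X) ∈ V ∧
    ∀ v : ℕ → X, ¬ Tendsto v atTop (𝓝 0) →
      ∃ (k : ℕ) (n : Fin (k + 1) → ℕ), StrictMono n ∧ (List.ofFn (v ∘ n)).sum ∉ V

/-- An additive Polish group is strongly NSS if it has an unenclosed set. -/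
def StronglyNSSAdd (X : Type*) [AddGroup X] [TopologicalSpace X] : Prop :=
  ∃ V : Set X, UnenclosedAdd X V

section helpers
set_option linter.unusedSectionVars false
variable {X : Type*} [NormedAddCommGroup X] [NormedSpace ℝ X]

lemma finset_norm_sum_le {v : ℕ → X}
    (hv : ∀ (k : ℕ) (n : Fin (k+1) → ℕ), StrictMono n → ‖(List.ofFn (v ∘ n)).sum‖ < 1)
    (F : Finset ℕ) : ‖∑ k ∈ F, v k‖ ≤ 1 := by
  rcases F.eq_empty_or_nonempty with rfl | hne
  · simp
  · obtain ⟨k, hk⟩ : ∃ k, F.card = k + 1 :=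
      ⟨F.card - 1, (Nat.succ_pred_eq_of_pos (Finset.card_pos.2 hne)).symm⟩
    set e := F.orderIsoOfFin hk
    have hmono : StrictMono (fun i : Fin (k+1) => (e i : ℕ)) :=
      fun i j hij => by exact_mod_cast e.strictMono hij
    have := hv k (fun i => (e i : ℕ)) hmono
    have hsum : (List.ofFn (v ∘ fun i : Fin (k+1) => (e i : ℕ))).sum = ∑ x ∈ F, v x := by
      rw [List.sum_ofFn]
      calc ∑ i : Fin (k+1), v (e i) = ∑ x : F, v x := Equiv.sum_comp e.toEquiv (fun x : F => v x)
      _ = ∑ x ∈ F, v x := F.sum_coe_sort v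
    rw [hsum] at this
    exact this.le

lemma row_bound {y : ℕ → X} (hy : ∀ F : Finset ℕ, ‖∑ k ∈ F, y k‖ ≤ 1)
    (g : X →L[ℝ] ℝ) (F : Finset ℕ) : ∑ k ∈ F, |g (y k)| ≤ 2 * ‖g‖ := by
  set P := F.filter (fun k => 0 ≤ g (y k)) with hP
  set N := F.filter (fun k => ¬ 0 ≤ g (y k)) with hN
  have hsplit : ∑ k ∈ F, |g (y k)| = ∑ k ∈ P, g (y k) + ∑ k ∈ N, -(g (y k)) := by
    rw [hP, hN, ← Finset.sum_filter_add_sum_filter_not F (fun k => 0 ≤ g (y k))]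
    congr 1
    · exact Finset.sum_congr rfl fun k hk => abs_of_nonneg (Finset.mem_filter.1 hk).2
    · exact Finset.sum_congr rfl fun k hk =>
        abs_of_neg (lt_of_not_ge (Finset.mem_filter.1 hk).2)
  have h1 : ∑ k ∈ P, g (y k) ≤ ‖g‖ := by
    calc ∑ k ∈ P, g (y k) = g (∑ k ∈ P, y k) := (map_sum g y P).symm
    _ ≤ ‖g (∑ k ∈ P, y k)‖ := le_abs_self _
    _ ≤ ‖g‖ * ‖∑ k ∈ P, y k‖ := g.le_opNorm _
    _ ≤ ‖g‖ * 1 := by gcongr; exact hy P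
    _ = ‖g‖ := mul_one _
  have h2 : ∑ k ∈ N, -(g (y k)) ≤ ‖g‖ := by
    calc ∑ k ∈ N, -(g (y k)) = -(g (∑ k ∈ N, y k)) := by
          rw [map_sum, ← Finset.sum_neg_distrib]
    _ ≤ ‖g (∑ k ∈ N, y k)‖ := neg_le_abs _
    _ ≤ ‖g‖ * ‖∑ k ∈ N, y k‖ := g.le_opNorm _
    _ ≤ ‖g‖ * 1 := by gcongr; exact hy N
    _ = ‖g‖ := mul_one _
  rw [hsplit]; linarith

lemma coef_bound {y : ℕ → X} (hy : ∀ F : Finset ℕ, ‖∑ k ∈ F, y k‖ ≤ 1)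
    {b : ℕ → ℝ} {B : ℝ} (hB : 0 ≤ B) {F : Finset ℕ} (hbF : ∀ k ∈ F, |b k| ≤ B) :
    ‖∑ k ∈ F, b k • y k‖ ≤ 2 * B := by
  rcases eq_or_ne (∑ k ∈ F, b k • y k) 0 with h0 | h0
  · rw [h0, norm_zero]; positivity
  · obtain ⟨g, hg1, hgs⟩ := exists_dual_vector ℝ (∑ k ∈ F, b k • y k) (norm_ne_zero_iff.2 h0)
    have : ‖∑ k ∈ F, b k • y k‖ = g (∑ k ∈ F, b k • y k) := by exact_mod_cast hgs.symm
    rw [this, map_sum]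
    calc ∑ k ∈ F, g (b k • y k) ≤ ∑ k ∈ F, |b k| * |g (y k)| := by
          refine Finset.sum_le_sum fun k _ => ?_
          rw [g.map_smul, smul_eq_mul]
          calc b k * g (y k) ≤ |b k * g (y k)| := le_abs_self _
          _ = |b k| * |g (y k)| := abs_mul _ _
    _ ≤ ∑ k ∈ F, B * |g (y k)| := by
          refine Finset.sum_le_sum fun k hk => by
            have := abs_nonneg (g (y k)); nlinarith [hbF k hk, abs_nonneg (b k)]
    _ = B * ∑ k ∈ F, |g (y k)| := by rw [Finset.mul_sum]
    _ ≤ B * (2 * ‖g‖) := by gcongr; exact row_bound hy g F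
    _ = 2 * B := by rw [hg1]; ring


lemma row_summable {y : ℕ → X} (hy : ∀ F : Finset ℕ, ‖∑ k ∈ F, y k‖ ≤ 1)
    (hrow : ∀ (g : X →L[ℝ] ℝ) (F : Finset ℕ), ∑ k ∈ F, |g (y k)| ≤ 2 * ‖g‖)
    (g : X →L[ℝ] ℝ) : Summable (fun k => |g (y k)|) :=
  summable_of_sum_le (fun k => abs_nonneg _) (fun F => hrow g F)

lemma tail_small {g : ℕ → ℝ} (hg : Summable g) (hg0 : ∀ k, 0 ≤ g k) {e : ℝ} (he : 0 < e) :
    ∃ N : ℕ, ∀ F : Finset ℕ, (∀ k ∈ F, N ≤ k) → ∑ k ∈ F, g k ≤ e := by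
  obtain ⟨s, hs⟩ := summable_iff_vanishing_norm.1 hg e he
  refine ⟨s.sup id + 1, fun F hF => ?_⟩
  have hdisj : Disjoint F s := by
    rw [Finset.disjoint_left]
    intro k hk hks
    have h1 := hF k hk
    have h2 : k ≤ s.sup id := Finset.le_sup (f := id) hks
    omega
  have := hs F hdisj
  calc ∑ k ∈ F, g k ≤ ‖∑ k ∈ F, g k‖ := le_abs_self _
  _ ≤ e := (hs F hdisj).le

lemma c0_abs_le_norm (a : C₀(ℕ, ℝ)) (s : ℕ) : |a s| ≤ ‖a‖ := by
  rw [← ZeroAtInftyContinuousMap.norm_toBCF_eq_norm]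
  exact a.toBCF.norm_coe_le_norm s

lemma c0_norm_le (a : C₀(ℕ, ℝ)) {C : ℝ} (hC : 0 ≤ C) (h : ∀ s, |a s| ≤ C) : ‖a‖ ≤ C := by
  rw [← ZeroAtInftyContinuousMap.norm_toBCF_eq_norm]
  exact (BoundedContinuousFunction.norm_le hC).2 h

lemma c0_small (a : C₀(ℕ, ℝ)) {e : ℝ} (he : 0 < e) : ∃ N, ∀ s, N ≤ s → |a s| ≤ e := by
  have h := a.zero_at_infty'
  rw [cocompact_eq_atTop] at h
  have := (NormedAddCommGroup.tendsto_nhds_zero.1 h) e he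
  obtain ⟨N, hN⟩ := eventually_atTop.1 this
  exact ⟨N, fun s hs => (hN s hs).le⟩

/-- the bump function at `n` -/
noncomputable def bump (n : ℕ) : C₀(ℕ, ℝ) :=
  ⟨⟨fun m => if m = n then 1 else 0, continuous_of_discreteTopology⟩, by
    rw [cocompact_eq_atTop]
    have h : ∀ᶠ m in (atTop : Filter ℕ), (if m = n then (1:ℝ) else 0) = 0 :=
      eventually_atTop.2 ⟨n + 1, fun m hm => if_neg (by omega)⟩
    exact Tendsto.congr' (h.mono fun m hm => hm.symm) tendsto_const_nhds⟩

@[simp] lemma bump_apply (n m : ℕ) : bump n m = if m = n then 1 else 0 := rfl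

lemma norm_sum_bump_le {ι : Type*} (F : Finset ι) (n : ι → ℕ) (hn : Function.Injective n) :
    ‖∑ i ∈ F, bump (n i)‖ ≤ 1 := by
  refine c0_norm_le _ one_pos.le fun m => ?_
  have hc : (∑ i ∈ F, bump (n i)) m = ∑ i ∈ F, (if m = n i then (1:ℝ) else 0) := by
    induction F using Finset.cons_induction with
    | empty => simp
    | cons a s ha ih => rw [Finset.sum_cons, Finset.sum_cons, ← ih]; rfl
  rw [hc]
  rcases Finset.eq_empty_or_nonempty (F.filter fun i => m = n i) with hfe | ⟨i₀, hi₀⟩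
  · rw [Finset.sum_eq_zero, abs_zero]
    · exact one_pos.le
    intro i hi
    rw [if_neg]
    intro hmi
    exact Finset.notMem_empty i (hfe ▸ Finset.mem_filter.2 ⟨hi, hmi⟩)
  · obtain ⟨hi₀F, hi₀m⟩ := Finset.mem_filter.1 hi₀
    rw [Finset.sum_eq_single_of_mem i₀ hi₀F]
    · rw [if_pos hi₀m]; norm_num
    intro j hj hji
    rw [if_neg]
    intro hmj
    exact hji (hn (hmj.symm.trans hi₀m))


lemma norm_bump (n : ℕ) : ‖bump n‖ = 1 := by
  refine le_antisymm (c0_norm_le _ one_pos.le fun m => ?_) ?_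
  · rw [bump_apply]; split <;> norm_num
  · have := c0_abs_le_norm (bump n) n
    rw [bump_apply, if_pos rfl] at this
    simpa using this

lemma backward_dir {Y : Submodule ℝ X} (e : C₀(ℕ, ℝ) ≃L[ℝ] Y) : ¬ StronglyNSSAdd X := by
  rintro ⟨V, hVo, hV0, hVp⟩
  obtain ⟨r, hr, hball⟩ := Metric.isOpen_iff.1 hVo 0 hV0
  have eC : C₀(ℕ, ℝ) →L[ℝ] Y := (e : C₀(ℕ, ℝ) →L[ℝ] Y)
  obtain ⟨δ, hδpos, hδr⟩ : ∃ δ : ℝ, 0 < δ ∧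
      ‖(e : C₀(ℕ, ℝ) →L[ℝ] Y)‖ * δ < r := by
    refine ⟨r / (2 * (‖(e : C₀(ℕ, ℝ) →L[ℝ] Y)‖ + 1)), by positivity, ?_⟩
    have h0 : (0:ℝ) ≤ ‖(e : C₀(ℕ, ℝ) →L[ℝ] Y)‖ := ContinuousLinearMap.opNorm_nonneg _
    have h1 : (0:ℝ) < ‖(e : C₀(ℕ, ℝ) →L[ℝ] Y)‖ + 1 := by linarith
    calc ‖(e : C₀(ℕ, ℝ) →L[ℝ] Y)‖ * (r / (2 * (‖(e : C₀(ℕ, ℝ) →L[ℝ] Y)‖ + 1)))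
        ≤ (‖(e : C₀(ℕ, ℝ) →L[ℝ] Y)‖ + 1) * (r / (2 * (‖(e : C₀(ℕ, ℝ) →L[ℝ] Y)‖ + 1))) := by
          have : (0:ℝ) ≤ r / (2 * (‖(e : C₀(ℕ, ℝ) →L[ℝ] Y)‖ + 1)) := by positivity
          nlinarith
      _ = r / 2 := by field_simp
      _ < r := by linarith
  set v : ℕ → X := fun t => ((e (δ • bump t) : Y) : X) with hv
  have hsum : ∀ (k : ℕ) (n : Fin (k+1) → ℕ), StrictMono n → (List.ofFn (v ∘ n)).sum ∈ V := by
    intro k n hn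
    have h1 : (List.ofFn (v ∘ n)).sum = ((e (δ • ∑ i : Fin (k+1), bump (n i)) : Y) : X) := by
      rw [List.sum_ofFn]
      calc ∑ i : Fin (k+1), (v ∘ n) i
          = ((∑ i : Fin (k+1), e (δ • bump (n i)) : Y) : X) :=
            (AddSubmonoidClass.coe_finset_sum _ _).symm
        _ = ((e (∑ i : Fin (k+1), δ • bump (n i)) : Y) : X) := by rw [map_sum]
        _ = ((e (δ • ∑ i : Fin (k+1), bump (n i)) : Y) : X) := by rw [Finset.smul_sum]
    apply hball
    rw [Metric.mem_ball, dist_zero_right, h1]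
    have hB : ‖∑ i : Fin (k+1), bump (n i)‖ ≤ 1 :=
      norm_sum_bump_le Finset.univ n hn.injective
    have hsm : ‖δ • ∑ i : Fin (k+1), bump (n i)‖ ≤ δ := by
      rw [norm_smul δ (∑ i : Fin (k+1), bump (n i)), Real.norm_eq_abs, abs_of_pos hδpos]
      nlinarith
    have hcast : ‖((e (δ • ∑ i : Fin (k+1), bump (n i)) : Y) : X)‖
        = ‖(e : C₀(ℕ, ℝ) →L[ℝ] Y) (δ • ∑ i : Fin (k+1), bump (n i))‖ := rfl
    rw [hcast]
    have hop := (e : C₀(ℕ, ℝ) →L[ℝ] Y).le_opNorm (δ • ∑ i : Fin (k+1), bump (n i))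
    have hnn : (0:ℝ) ≤ ‖(e : C₀(ℕ, ℝ) →L[ℝ] Y)‖ := ContinuousLinearMap.opNorm_nonneg _
    nlinarith
  have hnt : ¬ Tendsto v atTop (𝓝 0) := by
    intro h
    have hb : ∀ t, δ ≤ (‖(e.symm : Y →L[ℝ] C₀(ℕ, ℝ))‖ + 1) * ‖v t‖ := by
      intro t
      have h0 : ‖δ • bump t‖ = δ := by
        rw [norm_smul δ (bump t), Real.norm_eq_abs, abs_of_pos hδpos, norm_bump, mul_one]
      have h3 := (e.symm : Y →L[ℝ] C₀(ℕ, ℝ)).le_opNorm (e (δ • bump t))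
      have h1 : (e.symm : Y →L[ℝ] C₀(ℕ, ℝ)) (e (δ • bump t)) = δ • bump t := by simp
      rw [h1, h0] at h3
      have h2 : ‖(e (δ • bump t) : Y)‖ = ‖v t‖ := rfl
      rw [h2] at h3
      nlinarith [norm_nonneg ((e.symm : Y →L[ℝ] C₀(ℕ, ℝ))), norm_nonneg (v t)]
    have h2 : Tendsto (fun t => (‖(e.symm : Y →L[ℝ] C₀(ℕ, ℝ))‖ + 1) * ‖v t‖) atTop (𝓝 0) := by
      have h4 : Tendsto (fun t => ‖v t‖) atTop (𝓝 0) := by simpa using h.norm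
      have h5 := h4.const_mul (‖(e.symm : Y →L[ℝ] C₀(ℕ, ℝ))‖ + 1)
      simpa using h5
    obtain ⟨t, ht⟩ := (h2.eventually (eventually_lt_nhds hδpos)).exists
    exact absurd (hb t) (not_le.2 ht)
  obtain ⟨k, n, hmono, hnot⟩ := hVp v hnt
  exact hnot (hsum k n hmono)


lemma aux_t2t (t : ℕ) : (t : ℝ) * (2:ℝ)⁻¹ ^ t ≤ 1 := by
  have h1 : (t : ℝ) < 2 ^ t := by exact_mod_cast Nat.lt_two_pow_self
  have h2 : (0:ℝ) < 2 ^ t := by positivity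
  rw [inv_pow]
  rw [mul_inv_le_iff₀ h2]
  nlinarith

lemma selection {y : ℕ → X} (hy : ∀ F : Finset ℕ, ‖∑ k ∈ F, y k‖ ≤ 1)
    {ε : ℝ} (hε : 0 < ε) (hylb : ∀ k, ε ≤ ‖y k‖) :
    ∃ (z : ℕ → X) (h : ℕ → (X →L[ℝ] ℝ)),
      (∀ F : Finset ℕ, ‖∑ k ∈ F, z k‖ ≤ 1) ∧
      (∀ t, ‖h t‖ ≤ 2) ∧
      (∀ t, ε / 2 ≤ h t (z t)) ∧
      (∀ (t : ℕ) (F : Finset ℕ), t ∉ F → ∑ s ∈ F, |h t (z s)| ≤ ε / 8) := by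
  classical
  have hrow := row_bound hy
  have hyne : ∀ k, y k ≠ 0 := fun k hk => by
    have := hylb k; rw [hk, norm_zero] at this; linarith
  choose f hf1 hfd using fun k => exists_dual_vector ℝ (y k) (norm_ne_zero_iff.2 (hyne k))
  set A : ℕ → ℕ → ℝ := fun j k => f j (y k) with hA
  have hA2 : ∀ (j : ℕ) (F : Finset ℕ), ∑ k ∈ F, |A j k| ≤ 2 := by
    intro j F
    calc ∑ k ∈ F, |A j k| ≤ 2 * ‖f j‖ := hrow (f j) F
    _ = 2 := by rw [hf1 j, mul_one]
  have hAd : ∀ k, ε ≤ A k k := by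
    intro k
    have : A k k = ‖y k‖ := by rw [hA]; exact_mod_cast hfd k
    rw [this]; exact hylb k
  have hAb : ∀ j k, |A j k| ≤ 2 := by
    intro j k
    have := hA2 j {k}
    simpa using this
  -- pointwise convergent subsequence
  have hS : IsCompact (Set.univ.pi fun _ : ℕ => Set.Icc (-2:ℝ) 2) :=
    isCompact_univ_pi fun _ => isCompact_Icc
  have hu : ∀ j, A j ∈ (Set.univ.pi fun _ : ℕ => Set.Icc (-2:ℝ) 2) := by
    intro j
    rw [Set.mem_univ_pi]
    intro k
    exact abs_le.1 (hAb j k)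
  obtain ⟨c, -, φ, hφ, hconv⟩ := hS.tendsto_subseq hu
  have hck : ∀ k, Tendsto (fun i => A (φ i) k) atTop (𝓝 (c k)) := by
    intro k
    exact (tendsto_pi_nhds.1 hconv) k
  have hcF : ∀ F : Finset ℕ, ∑ k ∈ F, |c k| ≤ 2 := by
    intro F
    have h1 : Tendsto (fun i => ∑ k ∈ F, |A (φ i) k|) atTop (𝓝 (∑ k ∈ F, |c k|)) :=
      tendsto_finset_sum F fun k _ => (hck k).abs
    exact le_of_tendsto h1 (Eventually.of_forall fun i => hA2 (φ i) F)
  have hcsum : Summable fun k => |c k| :=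
    summable_of_sum_le (fun k => abs_nonneg _) hcF
  have hc0 : Tendsto (fun k => |c k|) atTop (𝓝 0) := hcsum.tendsto_atTop_zero
  have hrs : ∀ j, Summable fun k => |A j k| :=
    fun j => summable_of_sum_le (fun k => abs_nonneg _) (hA2 j)
  have hφtop : Tendsto φ atTop atTop := hφ.tendsto_atTop
  -- the recursive choice
  set P : ℕ × ℕ × ℕ → Prop := fun x =>
    x.2.1 < x.2.2 ∧ |c (φ x.2.1)| ≤ ε/4 ∧ |A (φ x.2.2) (φ x.2.1) - c (φ x.2.1)| ≤ ε/4 with hPdef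
  set r : ℕ × ℕ × ℕ → ℕ × ℕ × ℕ → Prop := fun x w =>
    x.1 < w.1 ∧ x.2.2 < w.2.1 ∧
    |A (φ w.2.1) (φ x.2.1) - c (φ x.2.1)| ≤ ε/32 * (2:ℝ)⁻¹ ^ w.1 ∧
    |A (φ w.2.2) (φ x.2.1) - c (φ x.2.1)| ≤ ε/32 * (2:ℝ)⁻¹ ^ w.1 ∧
    (∀ F : Finset ℕ, (∀ k ∈ F, φ w.2.1 ≤ k) → ∑ k ∈ F, |A (φ x.2.1) k| ≤ ε/64) ∧
    (∀ F : Finset ℕ, (∀ k ∈ F, φ w.2.1 ≤ k) → ∑ k ∈ F, |A (φ x.2.2) k| ≤ ε/64) with hrdef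
  have hstep : ∀ s : Finset (ℕ × ℕ × ℕ), (∀ x ∈ s, P x) → ∃ w, P w ∧ ∀ x ∈ s, r x w := by
    intro s _
    set t₂ : ℕ := (s.sup fun x => x.1) + 1 with ht₂
    -- choose N x for tails
    have htail : ∀ x : ℕ × ℕ × ℕ, ∃ N : ℕ, (∀ F : Finset ℕ, (∀ k ∈ F, N ≤ k) →
        ∑ k ∈ F, |A (φ x.2.1) k| ≤ ε/64) ∧ (∀ F : Finset ℕ, (∀ k ∈ F, N ≤ k) →
        ∑ k ∈ F, |A (φ x.2.2) k| ≤ ε/64) := by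
      intro x
      obtain ⟨N₁, hN₁⟩ := tail_small (hrs (φ x.2.1)) (fun k => abs_nonneg _)
        (by positivity : (0:ℝ) < ε/64)
      obtain ⟨N₂, hN₂⟩ := tail_small (hrs (φ x.2.2)) (fun k => abs_nonneg _)
        (by positivity : (0:ℝ) < ε/64)
      refine ⟨max N₁ N₂, fun F hF => hN₁ F fun k hk => le_trans (le_max_left _ _) (hF k hk),
        fun F hF => hN₂ F fun k hk => le_trans (le_max_right _ _) (hF k hk)⟩
    choose N hN₁ hN₂ using htail
    -- eventually conditions for j
    have hcφ : Tendsto (fun i => |c (φ i)|) atTop (𝓝 0) := hc0.comp hφtop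
    have E2 : ∀ᶠ i in atTop, |c (φ i)| ≤ ε/4 := by
      have := hcφ.eventually (eventually_le_nhds (by positivity : (0:ℝ) < ε/4))
      exact this
    have E1 : ∀ᶠ i in atTop, ∀ x ∈ s, x.2.2 < i :=
      eventually_all_finset s |>.2 fun x _ => eventually_gt_atTop _
    have E3 : ∀ᶠ i in atTop, ∀ x ∈ s,
        |A (φ i) (φ x.2.1) - c (φ x.2.1)| ≤ ε/32 * (2:ℝ)⁻¹ ^ t₂ := by
      refine eventually_all_finset s |>.2 fun x _ => ?_
      have h1 := (hck (φ x.2.1)).sub_const (c (φ x.2.1))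
      have h2 := h1.abs
      have h3 : |c (φ x.2.1) - c (φ x.2.1)| = 0 := by simp
      rw [sub_self, abs_zero] at h2
      exact h2.eventually (eventually_le_nhds (by positivity : (0:ℝ) < ε/32 * (2:ℝ)⁻¹ ^ t₂))
    have E4 : ∀ᶠ i in atTop, ∀ x ∈ s, N x ≤ φ i :=
      eventually_all_finset s |>.2 fun x _ => hφtop.eventually (eventually_ge_atTop (N x))
    obtain ⟨j, hjE1, hjE2, hjE3, hjE4⟩ := (E1.and (E2.and (E3.and E4))).exists
    -- eventually conditions for j'
    have E5 : ∀ᶠ i in atTop, |A (φ i) (φ j) - c (φ j)| ≤ ε/4 := by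
      have h1 := ((hck (φ j)).sub_const (c (φ j))).abs
      rw [sub_self, abs_zero] at h1
      exact h1.eventually (eventually_le_nhds (by positivity : (0:ℝ) < ε/4))
    have E6 : ∀ᶠ i in atTop, ∀ x ∈ s,
        |A (φ i) (φ x.2.1) - c (φ x.2.1)| ≤ ε/32 * (2:ℝ)⁻¹ ^ t₂ := E3
    have E7 : ∀ᶠ i in atTop, j < i := eventually_gt_atTop j
    obtain ⟨j', hj'E5, hj'E6, hj'E7⟩ := (E5.and (E6.and E7)).exists
    refine ⟨(t₂, j, j'), ⟨hj'E7, hjE2, hj'E5⟩, ?_⟩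
    intro x hx
    refine ⟨?_, hjE1 x hx, hjE3 x hx, hj'E6 x hx, ?_, ?_⟩
    · have : x.1 ≤ s.sup fun x => x.1 := Finset.le_sup hx
      omega
    · intro F hF
      exact hN₁ x F fun k hk => le_trans (hjE4 x hx) (hF k hk)
    · intro F hF
      exact hN₂ x F fun k hk => le_trans (hjE4 x hx) (hF k hk)
  obtain ⟨q, hqP, hqr⟩ := exists_seq_of_forall_finset_exists P r hstep
  have hjmono : StrictMono fun t => (q t).2.1 :=
    fun m n hmn => lt_trans (hqP m).1 ((hqr m n hmn).2.1)
  have htle : ∀ t, t ≤ (q t).1 := by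
    have hm : StrictMono fun t => (q t).1 := fun m n hmn => (hqr m n hmn).1
    exact fun t => hm.le_apply
  have hwmono : StrictMono fun t => φ ((q t).2.1) := hφ.comp hjmono
  refine ⟨fun t => y (φ ((q t).2.1)), fun t => f (φ ((q t).2.1)) - f (φ ((q t).2.2)),
    ?_, ?_, ?_, ?_⟩
  · -- subsums of z bounded
    intro F
    have h1 : ∑ t ∈ F, y (φ ((q t).2.1)) = ∑ k ∈ F.image (fun t => φ ((q t).2.1)), y k :=
      (Finset.sum_image fun a _ b _ hab => hwmono.injective hab).symm
    rw [h1]; exact hy _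
  · -- norm of h t
    intro t
    calc ‖f (φ ((q t).2.1)) - f (φ ((q t).2.2))‖
        ≤ ‖f (φ ((q t).2.1))‖ + ‖f (φ ((q t).2.2))‖ := norm_sub_le _ _
      _ = 2 := by rw [hf1, hf1]; norm_num
  · -- diagonal lower bound
    intro t
    have h1 : (f (φ ((q t).2.1)) - f (φ ((q t).2.2))) (y (φ ((q t).2.1)))
        = A (φ ((q t).2.1)) (φ ((q t).2.1)) - A (φ ((q t).2.2)) (φ ((q t).2.1)) := rfl
    rw [h1]
    have hd := hAd (φ ((q t).2.1))
    obtain ⟨-, hc4, hA4⟩ := hqP t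
    have h2 := abs_le.1 hc4
    have h3 := abs_le.1 hA4
    have h4 : A (φ ((q t).2.2)) (φ ((q t).2.1)) ≤ ε/2 := by
      have := h3.2; have := h2.2
      linarith [h3.2, h2.2]
    linarith
  · -- off-diagonal bound
    intro t F htF
    set F₁ := F.filter (fun s => s < t) with hF₁
    set F₂ := F.filter (fun s => t < s) with hF₂
    have hsplit : F = F₁ ∪ F₂ := by
      ext s
      simp only [hF₁, hF₂, Finset.mem_union, Finset.mem_filter]
      constructor
      · intro hs
        rcases lt_trichotomy s t with h | h | h
        · exact Or.inl ⟨hs, h⟩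
        · exact absurd (h ▸ hs) htF
        · exact Or.inr ⟨hs, h⟩
      · rintro (⟨hs, -⟩ | ⟨hs, -⟩) <;> exact hs
    have hdisj : Disjoint F₁ F₂ := by
      rw [Finset.disjoint_left]
      rintro s hs1 hs2
      rw [hF₁, Finset.mem_filter] at hs1
      rw [hF₂, Finset.mem_filter] at hs2
      omega
    have hb1 : ∑ s ∈ F₁, |(f (φ ((q t).2.1)) - f (φ ((q t).2.2))) (y (φ ((q s).2.1)))| ≤ ε/16 := by
      have hcard : F₁.card ≤ t := by
        have hsub : F₁ ⊆ Finset.range t := fun s hs => by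
          rw [Finset.mem_range]; exact (Finset.mem_filter.1 hs).2
        simpa using Finset.card_le_card hsub
      have hpow : (2:ℝ)⁻¹ ^ (q t).1 ≤ (2:ℝ)⁻¹ ^ t :=
        pow_le_pow_of_le_one (by norm_num) (by norm_num) (htle t)
      have helem : ∀ s ∈ F₁,
          |(f (φ ((q t).2.1)) - f (φ ((q t).2.2))) (y (φ ((q s).2.1)))| ≤ ε/16 * (2:ℝ)⁻¹ ^ t := by
        intro s hs
        have hst : s < t := (Finset.mem_filter.1 hs).2
        obtain ⟨-, -, hr1, hr2, -, -⟩ := hqr s t hst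
        have heq : (f (φ ((q t).2.1)) - f (φ ((q t).2.2))) (y (φ ((q s).2.1)))
            = (A (φ ((q t).2.1)) (φ ((q s).2.1)) - c (φ ((q s).2.1)))
              - (A (φ ((q t).2.2)) (φ ((q s).2.1)) - c (φ ((q s).2.1))) := by
          simp only [ContinuousLinearMap.sub_apply, hA]
          ring
        rw [heq]
        calc |(A (φ ((q t).2.1)) (φ ((q s).2.1)) - c (φ ((q s).2.1)))
              - (A (φ ((q t).2.2)) (φ ((q s).2.1)) - c (φ ((q s).2.1)))|
            ≤ |A (φ ((q t).2.1)) (φ ((q s).2.1)) - c (φ ((q s).2.1))|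
              + |A (φ ((q t).2.2)) (φ ((q s).2.1)) - c (φ ((q s).2.1))| := abs_sub _ _
          _ ≤ ε/32 * (2:ℝ)⁻¹ ^ (q t).1 + ε/32 * (2:ℝ)⁻¹ ^ (q t).1 := add_le_add hr1 hr2
          _ = ε/16 * (2:ℝ)⁻¹ ^ (q t).1 := by ring
          _ ≤ ε/16 * (2:ℝ)⁻¹ ^ t := by
              have : (0:ℝ) ≤ ε/16 := by positivity
              nlinarith
      calc ∑ s ∈ F₁, |(f (φ ((q t).2.1)) - f (φ ((q t).2.2))) (y (φ ((q s).2.1)))|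
          ≤ ∑ _s ∈ F₁, (ε/16 * (2:ℝ)⁻¹ ^ t) := Finset.sum_le_sum helem
        _ = F₁.card * (ε/16 * (2:ℝ)⁻¹ ^ t) := by rw [Finset.sum_const, nsmul_eq_mul]
        _ ≤ t * (ε/16 * (2:ℝ)⁻¹ ^ t) := by
            have h0 : (0:ℝ) ≤ ε/16 * (2:ℝ)⁻¹ ^ t := by positivity
            have : (F₁.card : ℝ) ≤ t := by exact_mod_cast hcard
            nlinarith
        _ = ε/16 * ((t:ℝ) * (2:ℝ)⁻¹ ^ t) := by ring
        _ ≤ ε/16 * 1 := by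
            have := aux_t2t t
            have h0 : (0:ℝ) ≤ ε/16 := by positivity
            nlinarith
        _ = ε/16 := mul_one _
    have hb2 : ∑ s ∈ F₂, |(f (φ ((q t).2.1)) - f (φ ((q t).2.2))) (y (φ ((q s).2.1)))| ≤ ε/32 := by
      obtain ⟨-, -, -, -, ht1, ht2⟩ := hqr t (t+1) (Nat.lt_succ_self t)
      have himg : ∀ k ∈ F₂.image (fun s => φ ((q s).2.1)), φ ((q (t+1)).2.1) ≤ k := by
        intro k hk
        obtain ⟨s, hs, rfl⟩ := Finset.mem_image.1 hk
        have hts : t < s := (Finset.mem_filter.1 hs).2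
        exact hwmono.monotone hts
      have hrow1 : ∑ s ∈ F₂, |A (φ ((q t).2.1)) (φ ((q s).2.1))| ≤ ε/64 := by
        have h1 : ∑ s ∈ F₂, |A (φ ((q t).2.1)) (φ ((q s).2.1))|
            = ∑ k ∈ F₂.image (fun s => φ ((q s).2.1)), |A (φ ((q t).2.1)) k| :=
          (Finset.sum_image (f := fun k => |A (φ ((q t).2.1)) k|) (g := fun s => φ ((q s).2.1))
            fun a _ b _ hab => hwmono.injective hab).symm
        rw [h1]; exact ht1 _ himg
      have hrow2 : ∑ s ∈ F₂, |A (φ ((q t).2.2)) (φ ((q s).2.1))| ≤ ε/64 := by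
        have h1 : ∑ s ∈ F₂, |A (φ ((q t).2.2)) (φ ((q s).2.1))|
            = ∑ k ∈ F₂.image (fun s => φ ((q s).2.1)), |A (φ ((q t).2.2)) k| :=
          (Finset.sum_image (f := fun k => |A (φ ((q t).2.2)) k|) (g := fun s => φ ((q s).2.1))
            fun a _ b _ hab => hwmono.injective hab).symm
        rw [h1]; exact ht2 _ himg
      calc ∑ s ∈ F₂, |(f (φ ((q t).2.1)) - f (φ ((q t).2.2))) (y (φ ((q s).2.1)))|
          ≤ ∑ s ∈ F₂, (|A (φ ((q t).2.1)) (φ ((q s).2.1))| + |A (φ ((q t).2.2)) (φ ((q s).2.1))|) := by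
            refine Finset.sum_le_sum fun s _ => ?_
            have heq : (f (φ ((q t).2.1)) - f (φ ((q t).2.2))) (y (φ ((q s).2.1)))
                = A (φ ((q t).2.1)) (φ ((q s).2.1)) - A (φ ((q t).2.2)) (φ ((q s).2.1)) := rfl
            rw [heq]
            exact abs_sub _ _
        _ = ∑ s ∈ F₂, |A (φ ((q t).2.1)) (φ ((q s).2.1))|
            + ∑ s ∈ F₂, |A (φ ((q t).2.2)) (φ ((q s).2.1))| := Finset.sum_add_distrib
        _ ≤ ε/64 + ε/64 := add_le_add hrow1 hrow2
        _ = ε/32 := by ring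
    calc ∑ s ∈ F, |(f (φ ((q t).2.1)) - f (φ ((q t).2.2))) (y (φ ((q s).2.1)))|
        = ∑ s ∈ F₁, |(f (φ ((q t).2.1)) - f (φ ((q t).2.2))) (y (φ ((q s).2.1)))|
          + ∑ s ∈ F₂, |(f (φ ((q t).2.1)) - f (φ ((q t).2.2))) (y (φ ((q s).2.1)))| := by
          rw [hsplit] at htF ⊢
          exact Finset.sum_union hdisj
      _ ≤ ε/16 + ε/32 := add_le_add hb1 hb2
      _ ≤ ε/8 := by linarith

lemma exists_c0_subspace [CompleteSpace X]
    {z : ℕ → X} {h : ℕ → (X →L[ℝ] ℝ)} {ε : ℝ} (hε : 0 < ε)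
    (hz : ∀ F : Finset ℕ, ‖∑ k ∈ F, z k‖ ≤ 1)
    (hh2 : ∀ t, ‖h t‖ ≤ 2)
    (hd : ∀ t, ε / 2 ≤ h t (z t))
    (hoff : ∀ (t : ℕ) (F : Finset ℕ), t ∉ F → ∑ s ∈ F, |h t (z s)| ≤ ε / 8) :
    ∃ Y : Submodule ℝ X, IsClosed (Y : Set X) ∧ Nonempty (C₀(ℕ, ℝ) ≃L[ℝ] Y) := by
  classical
  have hsummable : ∀ a : C₀(ℕ, ℝ), Summable (fun s => a s • z s) := by
    intro a
    rw [summable_iff_vanishing_norm]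
    intro e he
    obtain ⟨Nn, hN⟩ := c0_small a (by positivity : (0:ℝ) < e/4)
    refine ⟨Finset.range Nn, fun t hdisj => ?_⟩
    have hts : ∀ s ∈ t, |a s| ≤ e/4 := by
      intro s hs
      refine hN s ?_
      by_contra hlt
      push_neg at hlt
      exact (Finset.disjoint_left.1 hdisj) hs (Finset.mem_range.2 hlt)
    calc ‖∑ s ∈ t, a s • z s‖ ≤ 2 * (e/4) := coef_bound hz (by positivity) hts
      _ < e := by linarith
  have hTex : ∃ T : C₀(ℕ, ℝ) →L[ℝ] X, ∀ a, T a = ∑' s, a s • z s := by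
    have hTbound : ∀ a : C₀(ℕ, ℝ), ‖∑' s, a s • z s‖ ≤ 2 * ‖a‖ := by
      intro a
      have h1 : Tendsto (fun F : Finset ℕ => ∑ s ∈ F, a s • z s) atTop
          (𝓝 (∑' s, a s • z s)) := (hsummable a).hasSum
      have h2 := h1.norm
      refine le_of_tendsto h2 (Eventually.of_forall fun F => ?_)
      exact coef_bound hz (norm_nonneg a) (fun s _ => c0_abs_le_norm a s)
    refine ⟨LinearMap.mkContinuous
      { toFun := fun a => ∑' s, a s • z s
        map_add' := fun a b => by
          have h1 := Summable.tsum_add (hsummable a) (hsummable b)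
          rw [← h1]
          apply tsum_congr
          intro s
          show ((a + b) s) • z s = a s • z s + b s • z s
          have : (a + b) s = a s + b s := rfl
          rw [this, add_smul]
        map_smul' := fun rc a => by
          have h1 := Summable.tsum_const_smul rc (hsummable a)
          show ∑' s, ((rc • a) s) • z s = rc • ∑' s, a s • z s
          rw [← h1]
          apply tsum_congr
          intro s
          have : (rc • a) s = rc * a s := rfl
          rw [this, ← smul_smul] } 2 hTbound, fun a => rfl⟩
  obtain ⟨T, hTa⟩ := hTex
  have hzrow : ∀ t, Summable (fun s => |h t (z s)|) := fun t =>
    summable_of_sum_le (fun s => abs_nonneg _) (fun F => row_bound hz (h t) F)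
  -- key pointwise estimate
  have key : ∀ (a : C₀(ℕ, ℝ)) (t : ℕ), ε/2 * |a t| - ε/8 * ‖a‖ ≤ 2 * ‖T a‖ := by
    intro a t
    have hgsum : Summable (fun s => a s * h t (z s)) := by
      refine Summable.of_norm_bounded ((hzrow t).mul_left ‖a‖) ?_
      intro s
      show ‖a s * h t (z s)‖ ≤ ‖a‖ * |h t (z s)|
      rw [Real.norm_eq_abs, abs_mul]
      exact mul_le_mul_of_nonneg_right (c0_abs_le_norm a s) (abs_nonneg _)
    have hmap : h t (T a) = ∑' s, a s * h t (z s) := by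
      rw [hTa]
      rw [(h t).map_tsum (hsummable a)]
      apply tsum_congr
      intro s
      rw [(h t).map_smul]
      rfl
    have hsplit := Summable.tsum_eq_add_tsum_ite hgsum t
    have hrest : |∑' s, ite (s = t) 0 (a s * h t (z s))| ≤ ε/8 * ‖a‖ := by
      have hsumite : Summable (fun s => |ite (s = t) 0 (a s * h t (z s))|) := by
        refine Summable.of_norm_bounded
          ((hzrow t).mul_left ‖a‖) ?_
        intro s
        show ‖|ite (s = t) 0 (a s * h t (z s))|‖ ≤ ‖a‖ * |h t (z s)|
        rw [Real.norm_eq_abs, abs_abs]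
        split
        · rw [abs_zero]
          positivity
        · rw [abs_mul]
          exact mul_le_mul_of_nonneg_right (c0_abs_le_norm a s) (abs_nonneg _)
      have h1 : |∑' s, ite (s = t) 0 (a s * h t (z s))|
          ≤ ∑' s, |ite (s = t) 0 (a s * h t (z s))| := by
        have := norm_tsum_le_tsum_norm (f := fun s => ite (s = t) 0 (a s * h t (z s)))
          (by simpa [Real.norm_eq_abs] using hsumite)
        simpa [Real.norm_eq_abs] using this
      refine h1.trans ?_
      refine Summable.tsum_le_of_sum_le hsumite ?_
      intro F
      have h2 : ∑ s ∈ F, |ite (s = t) 0 (a s * h t (z s))|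
          = ∑ s ∈ F.erase t, |ite (s = t) 0 (a s * h t (z s))| :=
        (Finset.sum_erase F (by simp)).symm
      rw [h2]
      have h3 : ∑ s ∈ F.erase t, |ite (s = t) 0 (a s * h t (z s))|
          = ∑ s ∈ F.erase t, |a s * h t (z s)| := by
        refine Finset.sum_congr rfl fun s hs => ?_
        rw [if_neg (Finset.ne_of_mem_erase hs)]
      rw [h3]
      calc ∑ s ∈ F.erase t, |a s * h t (z s)|
          ≤ ∑ s ∈ F.erase t, ‖a‖ * |h t (z s)| := by
            refine Finset.sum_le_sum fun s _ => ?_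
            rw [abs_mul]
            exact mul_le_mul_of_nonneg_right (c0_abs_le_norm a s) (abs_nonneg _)
        _ = ‖a‖ * ∑ s ∈ F.erase t, |h t (z s)| := by rw [Finset.mul_sum]
        _ ≤ ‖a‖ * (ε/8) := by
            have := hoff t (F.erase t) (Finset.notMem_erase t F)
            have := norm_nonneg a
            nlinarith
        _ = ε/8 * ‖a‖ := by ring
    have hdiag : ε/2 * |a t| ≤ |a t * h t (z t)| := by
      rw [abs_mul]
      have h1 : ε/2 ≤ |h t (z t)| := (hd t).trans (le_abs_self _)
      have := abs_nonneg (a t)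
      nlinarith
    have hop : |h t (T a)| ≤ 2 * ‖T a‖ := by
      have h1 := (h t).le_opNorm (T a)
      have h2 := hh2 t
      have := norm_nonneg (T a)
      calc |h t (T a)| = ‖h t (T a)‖ := (Real.norm_eq_abs _).symm
        _ ≤ ‖h t‖ * ‖T a‖ := h1
        _ ≤ 2 * ‖T a‖ := by nlinarith
    have habs : |a t * h t (z t)| - |∑' s, ite (s = t) 0 (a s * h t (z s))| ≤ |h t (T a)| := by
      rw [hmap, hsplit]
      have := abs_add_le (a t * h t (z t) + ∑' s, ite (s = t) 0 (a s * h t (z s)))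
        (-(∑' s, ite (s = t) 0 (a s * h t (z s))))
      simp only [add_neg_cancel_right, abs_neg] at this
      linarith
    linarith
  -- lower bound
  have hTlow : ∀ a : C₀(ℕ, ℝ), 3*ε/16 * ‖a‖ ≤ ‖T a‖ := by
    intro a
    have hfin : ε/2 * ‖a‖ - ε/8 * ‖a‖ ≤ 2 * ‖T a‖ := by
      by_contra hlt
      push_neg at hlt
      obtain ⟨b, hb1, hb2⟩ := exists_between hlt
      have hbpos : 0 ≤ b := le_trans (by positivity) hb1.le
      have hη : (b + ε/8 * ‖a‖) / (ε/2) < ‖a‖ := by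
        rw [div_lt_iff₀ (by positivity)]
        nlinarith
      have hη0 : 0 ≤ (b + ε/8 * ‖a‖) / (ε/2) := by positivity
      obtain ⟨t, ht⟩ : ∃ t, (b + ε/8 * ‖a‖) / (ε/2) < |a t| := by
        by_contra hno
        push_neg at hno
        have := c0_norm_le a hη0 hno
        linarith
      have hkt := key a t
      have h1 : b + ε/8 * ‖a‖ < ε/2 * |a t| := by
        rw [div_lt_iff₀ (by positivity)] at ht
        nlinarith
      linarith
    linarith
  -- antilipschitz
  set K : NNReal := Real.toNNReal (16/(3*ε)) with hK
  have hKcoe : (K : ℝ) = 16/(3*ε) := Real.coe_toNNReal _ (by positivity)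
  have hanti : AntilipschitzWith K T := by
    refine ContinuousLinearMap.antilipschitz_of_bound T ?_
    intro a
    rw [hKcoe]
    have := hTlow a
    have h1 : 0 < 3*ε/16 := by positivity
    rw [div_mul_eq_mul_div, le_div_iff₀ (by positivity)]
    nlinarith
  have hinj : Function.Injective T := hanti.injective
  have hclosed : IsClosed (Set.range T) := hanti.isClosed_range T.uniformContinuous
  refine ⟨LinearMap.range (T : C₀(ℕ, ℝ) →ₗ[ℝ] X), ?_, ?_⟩
  · have : (LinearMap.range (T : C₀(ℕ, ℝ) →ₗ[ℝ] X) : Set X) = Set.range T := by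
      rw [LinearMap.coe_range]
      rfl
    rw [this]
    exact hclosed
  · have hinj' : Function.Injective (T : C₀(ℕ, ℝ) →ₗ[ℝ] X) := hinj
    set e₀ := LinearEquiv.ofInjective (T : C₀(ℕ, ℝ) →ₗ[ℝ] X) hinj' with he₀
    have he₀app : ∀ a, ((e₀ a : X)) = T a := fun a => rfl
    have hcont1 : Continuous fun a : C₀(ℕ, ℝ) => (e₀ a) := by
      rw [continuous_induced_rng]
      have : (fun a : C₀(ℕ, ℝ) => ((e₀ a : X))) = fun a => T a := funext he₀app
      show Continuous fun a : C₀(ℕ, ℝ) => ((e₀ a : X))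
      rw [this]
      exact T.continuous
    have hcont2 : Continuous (e₀.symm : LinearMap.range (T : C₀(ℕ, ℝ) →ₗ[ℝ] X) → C₀(ℕ, ℝ)) := by
      have hlip : LipschitzWith K (e₀.symm : LinearMap.range (T : C₀(ℕ, ℝ) →ₗ[ℝ] X) → C₀(ℕ, ℝ)) := by
        refine LipschitzWith.of_dist_le_mul ?_
        intro u v
        have hTu : T (e₀.symm u) = (u : X) := by
          have := he₀app (e₀.symm u)
          rw [← this, LinearEquiv.apply_symm_apply]
        have hTv : T (e₀.symm v) = (v : X) := by
          have := he₀app (e₀.symm v)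
          rw [← this, LinearEquiv.apply_symm_apply]
        have h1 : ‖e₀.symm u - e₀.symm v‖ ≤ (K : ℝ) * ‖T (e₀.symm u - e₀.symm v)‖ := by
          rw [hKcoe]
          have := hTlow (e₀.symm u - e₀.symm v)
          rw [div_mul_eq_mul_div, le_div_iff₀ (by positivity)]
          nlinarith [norm_nonneg (T (e₀.symm u - e₀.symm v)), norm_nonneg (e₀.symm u - e₀.symm v)]
        have h2 : T (e₀.symm u - e₀.symm v) = ((u - v : _) : X) := by
          rw [map_sub, hTu, hTv, Submodule.coe_sub]
        rw [dist_eq_norm, dist_eq_norm, ← Submodule.norm_coe (u - v), ← h2]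
        exact h1
      exact hlip.continuous
    exact ⟨{ e₀ with continuous_toFun := hcont1, continuous_invFun := hcont2 }⟩

end helpers

/-- A separable Banach space `X` is not strongly NSS iff it has a closed linear subspace
topologically isomorphic to `c₀`. -/
theorem stmt_7 (X : Type*) [NormedAddCommGroup X] [NormedSpace ℝ X] [CompleteSpace X]
    [TopologicalSpace.SeparableSpace X] :
    ¬ StronglyNSSAdd X ↔
      ∃ Y : Submodule ℝ X, IsClosed (Y : Set X) ∧ Nonempty (C₀(ℕ, ℝ) ≃L[ℝ] Y) := by
  constructor
  · intro hns
    have h1 : ¬ UnenclosedAdd X (Metric.ball (0:X) 1) := fun hU => hns ⟨_, hU⟩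
    rw [UnenclosedAdd] at h1
    push_neg at h1
    obtain ⟨v, hvt, hvin⟩ := h1 Metric.isOpen_ball (Metric.mem_ball_self one_pos)
    have hvlt : ∀ (k : ℕ) (n : Fin (k+1) → ℕ), StrictMono n →
        ‖(List.ofFn (v ∘ n)).sum‖ < 1 := by
      intro k n hn
      have := hvin k n hn
      rwa [Metric.mem_ball, dist_zero_right] at this
    rw [NormedAddCommGroup.tendsto_nhds_zero] at hvt
    push_neg at hvt
    obtain ⟨ε, hε, hfreq⟩ := hvt
    have hfreq' : ∃ᶠ n in atTop, ε ≤ ‖v n‖ := by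
      exact hfreq
    obtain ⟨m, hm, hmε⟩ := Filter.extraction_of_frequently_atTop hfreq'
    have hy : ∀ F : Finset ℕ, ‖∑ k ∈ F, v (m k)‖ ≤ 1 := by
      intro F
      have h1 : ∑ k ∈ F, v (m k) = ∑ i ∈ F.image m, v i :=
        (Finset.sum_image (fun a _ b _ hab => hm.injective hab)).symm
      rw [h1]
      exact finset_norm_sum_le hvlt _
    obtain ⟨z, h, hz, hh2, hd, hoff⟩ := selection hy hε hmε
    exact exists_c0_subspace hε hz hh2 hd hoff
  · rintro ⟨Y, -, ⟨e⟩⟩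
    exact backward_dir e
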